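/- arXiv:2311.08289 — 5 statements merged into one kernel-verified Lean document; each statement's English description precedes it below -/
import Mathlib

section
/- For every τ > 0 and x ∈ ℝ, the function v is differentiable in τ and twice differentiable in x at (τ,x), and it satisfies the reduced Black–Scholes heat-type equation ∂_τ v(τ,x) = (1/2)(∂²_x v(τ,x) − ∂_x v(τ,x)). -/
open MeasureTheory

/-- Standard normal cumulative distribution function. -/
noncomputable def stdN (y : ℝ) : ℝ :=
  ∫ u in Set.Iio y, Real.exp (-u ^ 2 / 2) / Real.sqrt (2 * Real.pi)

/-- Unit-volatility Black–Scholes price in reduced variables. -/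
noncomputable def bsv (τ x : ℝ) : ℝ :=
  Real.exp x * stdN (x / Real.sqrt τ + Real.sqrt τ / 2) -
    stdN (x / Real.sqrt τ - Real.sqrt τ / 2)

/-- Standard normal density. -/
noncomputable def phi (u : ℝ) : ℝ := Real.exp (-u ^ 2 / 2) / Real.sqrt (2 * Real.pi)

lemma phi_cont : Continuous phi := by
  unfold phi
  fun_prop

lemma phi_integrable : Integrable phi := by
  have h : Integrable (fun u : ℝ => Real.exp (-(1/2 : ℝ) * u ^ 2)) :=
    integrable_exp_neg_mul_sq (by norm_num)
  have h2 := h.div_const (Real.sqrt (2 * Real.pi))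
  refine h2.congr ?_
  filter_upwards with u
  unfold phi
  ring_nf

lemma hasDerivAt_stdN (y : ℝ) : HasDerivAt stdN (phi y) y := by
  have heq : ∀ z : ℝ, stdN z = stdN 0 + ∫ u in (0:ℝ)..z, phi u := by
    intro z
    have h1 : (∫ u in Set.Iic z, phi u) - (∫ u in Set.Iic 0, phi u)
        = ∫ u in (0:ℝ)..z, phi u :=
      intervalIntegral.integral_Iic_sub_Iic phi_integrable.integrableOn phi_integrable.integrableOn
    have h2 : stdN z = ∫ u in Set.Iic z, phi u := by
      rw [integral_Iic_eq_integral_Iio]; rfl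
    have h3 : stdN 0 = ∫ u in Set.Iic 0, phi u := by
      rw [integral_Iic_eq_integral_Iio]; rfl
    rw [h2, h3]; linarith
  have hD : HasDerivAt (fun z => stdN 0 + ∫ u in (0:ℝ)..z, phi u) (phi y) y := by
    refine HasDerivAt.const_add _ ?_
    exact intervalIntegral.integral_hasDerivAt_right
      (phi_integrable.intervalIntegrable)
      (phi_cont.stronglyMeasurableAtFilter _ _) phi_cont.continuousAt
  exact hD.congr_of_eventuallyEq (by filter_upwards with z using heq z)

lemma key_identity (s x : ℝ) (hs : s ≠ 0) :
    Real.exp x * phi (x / s + s / 2) = phi (x / s - s / 2) := by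
  unfold phi
  rw [mul_div_assoc', ← Real.exp_add]
  congr 1
  field_simp
  ring

lemma hasDerivAt_bsv_x (τ : ℝ) (hτ : 0 < τ) (x : ℝ) :
    HasDerivAt (fun y => bsv τ y)
      (Real.exp x * stdN (x / Real.sqrt τ + Real.sqrt τ / 2)) x := by
  set s := Real.sqrt τ with hsdef
  have hs : 0 < s := Real.sqrt_pos.mpr hτ
  have h1 : HasDerivAt (fun y : ℝ => y / s + s / 2) (1 / s) x := by
    simpa using ((hasDerivAt_id x).div_const s).add_const (s / 2)
  have h2 : HasDerivAt (fun y : ℝ => y / s - s / 2) (1 / s) x := by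
    simpa using ((hasDerivAt_id x).div_const s).sub_const (s / 2)
  have hN1 : HasDerivAt (fun y : ℝ => stdN (y / s + s / 2))
      (phi (x / s + s / 2) * (1 / s)) x := (hasDerivAt_stdN _).comp x h1
  have hN2 : HasDerivAt (fun y : ℝ => stdN (y / s - s / 2))
      (phi (x / s - s / 2) * (1 / s)) x := (hasDerivAt_stdN _).comp x h2
  have hE : HasDerivAt Real.exp (Real.exp x) x := Real.hasDerivAt_exp x
  have htot := (hE.mul hN1).sub hN2
  have hval : Real.exp x * stdN (x / s + s / 2)
      + Real.exp x * (phi (x / s + s / 2) * (1 / s))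
      - phi (x / s - s / 2) * (1 / s) = Real.exp x * stdN (x / s + s / 2) := by
    rw [← mul_assoc, key_identity s x (ne_of_gt hs)]
    ring
  rw [← hval]
  exact htot.congr_of_eventuallyEq (by filter_upwards with z; simp [bsv, hsdef])

/-- For every `τ > 0` and `x ∈ ℝ`, `v` is differentiable in `τ` and twice differentiable
in `x` at `(τ, x)`, and satisfies `∂_τ v = (1/2) (∂²_x v − ∂_x v)`. -/
theorem bsv_satisfies_reduced_heat_equation (τ x : ℝ) (hτ : 0 < τ) :
    ∃ vτ vx vxx : ℝ,
      HasDerivAt (fun t => bsv t x) vτ τ ∧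
      HasDerivAt (fun y => bsv τ y) vx x ∧
      HasDerivAt (fun y => deriv (fun z => bsv τ z) y) vxx x ∧
      vτ = (1 / 2) * (vxx - vx) := by
  set s := Real.sqrt τ with hsdef
  have hs : 0 < s := Real.sqrt_pos.mpr hτ
  have hsne : s ≠ 0 := ne_of_gt hs
  -- x-derivative
  have hvx := hasDerivAt_bsv_x τ hτ x
  -- second x-derivative
  have hderiv_eq : (fun y => deriv (fun z => bsv τ z) y)
      = fun y => Real.exp y * stdN (y / s + s / 2) := by
    funext y
    exact (hasDerivAt_bsv_x τ hτ y).deriv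
  have h1 : HasDerivAt (fun y : ℝ => y / s + s / 2) (1 / s) x := by
    simpa using ((hasDerivAt_id x).div_const s).add_const (s / 2)
  have hN1 : HasDerivAt (fun y : ℝ => stdN (y / s + s / 2))
      (phi (x / s + s / 2) * (1 / s)) x := (hasDerivAt_stdN _).comp x h1
  have hE : HasDerivAt Real.exp (Real.exp x) x := Real.hasDerivAt_exp x
  have hvxx : HasDerivAt (fun y => deriv (fun z => bsv τ z) y)
      (Real.exp x * stdN (x / s + s / 2)
        + Real.exp x * (phi (x / s + s / 2) * (1 / s))) x := by
    rw [hderiv_eq]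
    exact hE.mul hN1
  -- τ-derivative
  have hsq : HasDerivAt Real.sqrt (1 / (2 * s)) τ := Real.hasDerivAt_sqrt (ne_of_gt hτ)
  have hinv : HasDerivAt (fun t => (Real.sqrt t)⁻¹) (-(1 / (2 * s)) / s ^ 2) τ :=
    hsq.inv hsne
  have hd1 : HasDerivAt (fun t : ℝ => x / Real.sqrt t + Real.sqrt t / 2)
      (x * (-(1 / (2 * s)) / s ^ 2) + (1 / (2 * s)) / 2) τ := by
    have := (hinv.const_mul x).add (hsq.div_const 2)
    simpa [div_eq_mul_inv, Pi.add_def] using this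
  have hd2 : HasDerivAt (fun t : ℝ => x / Real.sqrt t - Real.sqrt t / 2)
      (x * (-(1 / (2 * s)) / s ^ 2) - (1 / (2 * s)) / 2) τ := by
    have := (hinv.const_mul x).sub (hsq.div_const 2)
    simpa [div_eq_mul_inv, Pi.sub_def] using this
  have hN1t : HasDerivAt (fun t : ℝ => stdN (x / Real.sqrt t + Real.sqrt t / 2))
      (phi (x / s + s / 2) * (x * (-(1 / (2 * s)) / s ^ 2) + (1 / (2 * s)) / 2)) τ :=
    (hasDerivAt_stdN _).comp τ hd1
  have hN2t : HasDerivAt (fun t : ℝ => stdN (x / Real.sqrt t - Real.sqrt t / 2))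
      (phi (x / s - s / 2) * (x * (-(1 / (2 * s)) / s ^ 2) - (1 / (2 * s)) / 2)) τ :=
    (hasDerivAt_stdN _).comp τ hd2
  have hvτ : HasDerivAt (fun t => bsv t x)
      (Real.exp x * (phi (x / s + s / 2) * (x * (-(1 / (2 * s)) / s ^ 2) + (1 / (2 * s)) / 2))
        - phi (x / s - s / 2) * (x * (-(1 / (2 * s)) / s ^ 2) - (1 / (2 * s)) / 2)) τ := by
    exact ((hN1t.const_mul (Real.exp x)).sub hN2t).congr_of_eventuallyEq
      (by filter_upwards with t; simp [bsv])
  refine ⟨_, _, _, hvτ, hvx, hvxx, ?_⟩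
  have key := key_identity s x hsne
  rw [show Real.exp x * (phi (x / s + s / 2) * (x * (-(1 / (2 * s)) / s ^ 2) + (1 / (2 * s)) / 2))
      = phi (x / s - s / 2) * (x * (-(1 / (2 * s)) / s ^ 2) + (1 / (2 * s)) / 2) from by
    rw [← mul_assoc, key]]
  rw [show Real.exp x * stdN (x / s + s / 2) + Real.exp x * (phi (x / s + s / 2) * (1 / s))
      - Real.exp x * stdN (x / s + s / 2) = phi (x / s - s / 2) * (1 / s) from by
    rw [← mul_assoc, key]; ring]
  ring
end

section
/- For every x ∈ ℝ, the limit of v(τ,x) as τ → 0⁺ exists and equals (e^x − 1)⁺ = max(e^x − 1, 0); that is, v attains the Call payoff as initial condition. -/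
open MeasureTheory

/-- Standard normal density. -/
noncomputable def stdn (y : ℝ) : ℝ :=
  Real.exp (-y ^ 2 / 2) / Real.sqrt (2 * Real.pi)

open Filter Set Real in
lemma integrable_stdn : Integrable stdn := by
  have h : Integrable (fun u : ℝ => Real.exp (-(1/2) * u ^ 2)) :=
    integrable_exp_neg_mul_sq (by norm_num)
  have := h.div_const (Real.sqrt (2 * Real.pi))
  refine this.congr (Filter.Eventually.of_forall fun u => ?_)
  unfold stdn
  ring_nf

open Filter Set Real in
lemma integral_stdn : ∫ u, stdn u = 1 := by
  have h : (∫ u : ℝ, Real.exp (-(1/2) * u ^ 2)) = Real.sqrt (Real.pi / (1/2)) :=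
    integral_gaussian (1/2)
  have heq : ∀ u : ℝ, stdn u = Real.exp (-(1/2) * u ^ 2) / Real.sqrt (2 * Real.pi) := by
    intro u; unfold stdn; ring_nf
  have hpos : (0:ℝ) < Real.sqrt (2 * Real.pi) :=
    Real.sqrt_pos.mpr (by positivity)
  calc ∫ u, stdn u = (∫ u : ℝ, Real.exp (-(1/2) * u ^ 2)) / Real.sqrt (2 * Real.pi) := by
        rw [← integral_div]; exact integral_congr_ae (Filter.Eventually.of_forall heq)
    _ = 1 := by
        rw [h]
        rw [show Real.pi / (1/2) = 2 * Real.pi by ring]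
        field_simp

lemma stdN_eq (y : ℝ) : stdN y = ∫ u in Set.Iic y, stdn u := by
  unfold stdN stdn
  exact setIntegral_congr_set (Iio_ae_eq_Iic)

open Filter in
lemma stdN_tendsto_atTop : Tendsto stdN atTop (nhds 1) := by
  have hc : AECover (volume : Measure ℝ) atTop fun y : ℝ => Set.Iio y :=
    aecover_Iio tendsto_id
  have := hc.integral_tendsto_of_countably_generated integrable_stdn
  rw [integral_stdn] at this
  refine this.congr fun y => ?_
  unfold stdN stdn
  rfl

open Filter in
lemma stdN_tendsto_atBot : Tendsto stdN atBot (nhds 0) := by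
  have hc : AECover (volume : Measure ℝ) atBot fun y : ℝ => Set.Ici y :=
    aecover_Ici tendsto_id
  have h := hc.integral_tendsto_of_countably_generated integrable_stdn
  rw [integral_stdn] at h
  have key : ∀ y : ℝ, stdN y = 1 - ∫ u in Set.Ici y, stdn u := by
    intro y
    have hsplit : (∫ u in Set.Iio y, stdn u) + ∫ u in Set.Ici y, stdn u = ∫ u, stdn u :=
      intervalIntegral.integral_Iio_add_Ici integrable_stdn.integrableOn integrable_stdn.integrableOn
    rw [integral_stdn] at hsplit
    have : stdN y = ∫ u in Set.Iio y, stdn u := rfl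
    linarith
  have : Tendsto (fun y : ℝ => 1 - ∫ u in Set.Ici y, stdn u) atBot (nhds (1 - 1)) :=
    tendsto_const_nhds.sub h
  simp only [sub_self] at this
  exact this.congr fun y => (key y).symm

lemma continuous_stdN : Continuous stdN := by
  have h := integrable_stdn.continuous_primitive 0
  have key : ∀ y : ℝ, stdN y = stdN 0 + ∫ t in (0:ℝ)..y, stdn t := by
    intro y
    rw [stdN_eq, stdN_eq]
    have h2 : ((∫ u in Set.Iic y, stdn u) - ∫ u in Set.Iic (0:ℝ), stdn u)
        = ∫ t in (0:ℝ)..y, stdn t :=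
      intervalIntegral.integral_Iic_sub_Iic integrable_stdn.integrableOn
        integrable_stdn.integrableOn
    linarith
  have : Continuous fun y : ℝ => stdN 0 + ∫ t in (0:ℝ)..y, stdn t :=
    continuous_const.add h
  exact this.congr fun y => (key y).symm

open Filter Set in
lemma sqrt_tendsto : Tendsto Real.sqrt (nhdsWithin 0 (Set.Ioi 0)) (nhdsWithin 0 (Set.Ioi 0)) := by
  apply tendsto_nhdsWithin_of_tendsto_nhds_of_eventually_within
  · have : Tendsto Real.sqrt (nhds 0) (nhds (Real.sqrt 0)) :=
      Real.continuous_sqrt.continuousAt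
    rw [Real.sqrt_zero] at this
    exact this.mono_left nhdsWithin_le_nhds
  · filter_upwards [self_mem_nhdsWithin] with t ht
    exact Real.sqrt_pos.mpr ht

/-- As `τ → 0⁺`, `v(τ, x)` tends to the Call payoff `(e^x − 1)⁺`. -/
theorem bsv_tendsto_call_payoff (x : ℝ) :
    Filter.Tendsto (fun τ => bsv τ x) (nhdsWithin 0 (Set.Ioi 0))
      (nhds (max (Real.exp x - 1) 0)) := by
  have hs := sqrt_tendsto
  have hs0 : Filter.Tendsto (fun τ : ℝ => Real.sqrt τ) (nhdsWithin 0 (Set.Ioi 0)) (nhds 0) :=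
    hs.mono_right nhdsWithin_le_nhds
  have hshalf : Filter.Tendsto (fun τ : ℝ => Real.sqrt τ / 2) (nhdsWithin 0 (Set.Ioi 0))
      (nhds 0) := by
    simpa using hs0.div_const 2
  rcases lt_trichotomy x 0 with hx | hx | hx
  · -- x < 0 : both arguments → -∞, bsv → 0
    have hmax : max (Real.exp x - 1) 0 = 0 := by
      apply max_eq_right
      have : Real.exp x < 1 := Real.exp_lt_one_iff.mpr hx
      linarith
    rw [hmax]
    have hinv : Filter.Tendsto (fun τ : ℝ => x / Real.sqrt τ) (nhdsWithin 0 (Set.Ioi 0))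
        Filter.atBot := by
      have h1 : Filter.Tendsto (fun s : ℝ => x / s) (nhdsWithin 0 (Set.Ioi 0)) Filter.atBot := by
        have h2 : Filter.Tendsto (fun s : ℝ => s⁻¹) (nhdsWithin 0 (Set.Ioi 0)) Filter.atTop :=
          tendsto_inv_nhdsGT_zero
        have h3 := h2.const_mul_atTop_of_neg hx
        refine h3.congr fun s => ?_
        rw [div_eq_mul_inv, mul_comm]
      exact h1.comp hs
    have harg1 : Filter.Tendsto (fun τ : ℝ => x / Real.sqrt τ + Real.sqrt τ / 2)
        (nhdsWithin 0 (Set.Ioi 0)) Filter.atBot := hinv.atBot_add hshalf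
    have harg2 : Filter.Tendsto (fun τ : ℝ => x / Real.sqrt τ - Real.sqrt τ / 2)
        (nhdsWithin 0 (Set.Ioi 0)) Filter.atBot := by
      have := hinv.atBot_add (hshalf.neg)
      simpa [sub_eq_add_neg] using this
    have h1 := stdN_tendsto_atBot.comp harg1
    have h2 := stdN_tendsto_atBot.comp harg2
    have : Filter.Tendsto (fun τ => bsv τ x) (nhdsWithin 0 (Set.Ioi 0))
        (nhds (Real.exp x * 0 - 0)) := by
      exact ((tendsto_const_nhds.mul h1).sub h2)
    simpa using this
  · -- x = 0
    subst hx
    have hmax : max (Real.exp 0 - 1) 0 = 0 := by simp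
    rw [hmax]
    have h1 : Filter.Tendsto (fun τ : ℝ => (0:ℝ) / Real.sqrt τ + Real.sqrt τ / 2)
        (nhdsWithin 0 (Set.Ioi 0)) (nhds 0) := by
      simpa using hshalf
    have h2 : Filter.Tendsto (fun τ : ℝ => (0:ℝ) / Real.sqrt τ - Real.sqrt τ / 2)
        (nhdsWithin 0 (Set.Ioi 0)) (nhds 0) := by
      have := hshalf.neg
      simp only [neg_zero] at this
      refine this.congr fun τ => ?_
      simp [sub_eq_add_neg]
    have hc : Filter.Tendsto stdN (nhds 0) (nhds (stdN 0)) := continuous_stdN.continuousAt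
    have hA := hc.comp h1
    have hB := hc.comp h2
    have : Filter.Tendsto (fun τ => bsv τ 0) (nhdsWithin 0 (Set.Ioi 0))
        (nhds (Real.exp 0 * stdN 0 - stdN 0)) := (tendsto_const_nhds.mul hA).sub hB
    simpa using this
  · -- x > 0 : both arguments → +∞, bsv → e^x - 1
    have hmax : max (Real.exp x - 1) 0 = Real.exp x - 1 := by
      apply max_eq_left
      have h1 : Real.exp 0 < Real.exp x := Real.exp_lt_exp.mpr hx
      rw [Real.exp_zero] at h1
      linarith
    rw [hmax]
    have hinv : Filter.Tendsto (fun τ : ℝ => x / Real.sqrt τ) (nhdsWithin 0 (Set.Ioi 0))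
        Filter.atTop := by
      have h2 : Filter.Tendsto (fun s : ℝ => s⁻¹) (nhdsWithin 0 (Set.Ioi 0)) Filter.atTop :=
        tendsto_inv_nhdsGT_zero
      have h3 := h2.const_mul_atTop hx
      have h1 : Filter.Tendsto (fun s : ℝ => x / s) (nhdsWithin 0 (Set.Ioi 0)) Filter.atTop := by
        refine h3.congr fun s => ?_
        rw [div_eq_mul_inv, mul_comm]
      exact h1.comp hs
    have harg1 : Filter.Tendsto (fun τ : ℝ => x / Real.sqrt τ + Real.sqrt τ / 2)
        (nhdsWithin 0 (Set.Ioi 0)) Filter.atTop := hinv.atTop_add hshalf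
    have harg2 : Filter.Tendsto (fun τ : ℝ => x / Real.sqrt τ - Real.sqrt τ / 2)
        (nhdsWithin 0 (Set.Ioi 0)) Filter.atTop := by
      have := hinv.atTop_add (hshalf.neg)
      simpa [sub_eq_add_neg] using this
    have h1 := stdN_tendsto_atTop.comp harg1
    have h2 := stdN_tendsto_atTop.comp harg2
    have : Filter.Tendsto (fun τ => bsv τ x) (nhdsWithin 0 (Set.Ioi 0))
        (nhds (Real.exp x * 1 - 1)) := (tendsto_const_nhds.mul h1).sub h2
    simpa using this
end

section
/- Let d, m ∈ ℕ, t ≥ 0, C > 0 and H ∈ (0,1) with H ≠ 1/2. Let k : ℝ → ℝ^{d×m} (matrices with the Frobenius norm ‖·‖) be differentiable at every s > t with ‖k'(s)‖ ≤ C (s−t)^{H−3/2}, and for δ > 0 define the truncated kernel k^δ(s) := k(max(s, t+δ)). Then for every T̆ ≥ t and every δ ∈ (0, T̆ − t], the truncation error satisfies ∫_t^{T̆} ‖k^δ(s) − k(s)‖² ds ≤ (C/|H − 1/2|)² · (1 + 1/(2H)) · δ^{2H}; in particular ∫_t^{T̆} ‖k^δ(s) − k(s)‖² ds → 0 as δ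 → 0⁺. -/
set_option maxHeartbeats 1000000


open MeasureTheory intervalIntegral

/-- Truncation error for a Volterra kernel: if `‖k'(s)‖ ≤ C (s−t)^{H−3/2}` for `s > t` and
`k^δ(s) := k(s ∨ (t+δ))`, then for `0 < δ ≤ T̆ − t`,
`∫_t^{T̆} ‖k^δ(s) − k(s)‖² ds ≤ (C/|H−1/2|)² (1 + 1/(2H)) δ^{2H}`, and in particular the
truncation error tends to `0` as `δ → 0⁺`. -/
theorem kernel_truncation_error (d m : ℕ) (t C H : ℝ) (ht : 0 ≤ t) (hC : 0 < C)
    (hH0 : 0 < H) (hH1 : H < 1) (hH : H ≠ 1 / 2)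
    (k k' : ℝ → EuclideanSpace ℝ (Fin d × Fin m))
    (hderiv : ∀ s, t < s → HasDerivAt k (k' s) s)
    (hbound : ∀ s, t < s → ‖k' s‖ ≤ C * (s - t) ^ (H - 3 / 2))
    (T : ℝ) (hT : t ≤ T) :
    (∀ δ : ℝ, 0 < δ → δ ≤ T - t →
      ∫ s in t..T, ‖k (max s (t + δ)) - k s‖ ^ 2 ≤
        (C / |H - 1 / 2|) ^ 2 * (1 + 1 / (2 * H)) * δ ^ (2 * H)) ∧
    Filter.Tendsto (fun δ : ℝ => ∫ s in t..T, ‖k (max s (t + δ)) - k s‖ ^ 2)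
      (nhdsWithin 0 (Set.Ioi 0)) (nhds 0) := by
  have hq : H - 1 / 2 ≠ 0 := sub_ne_zero.2 hH
  have hp : (-1 : ℝ) < 2 * H - 1 := by linarith
  -- key pointwise estimate
  have key : ∀ δ : ℝ, 0 < δ → ∀ s, t < s → s ≤ t + δ →
      ‖k (t + δ) - k s‖ ≤
        (C / (H - 1 / 2)) * ((t + δ - t) ^ (H - 1 / 2) - (s - t) ^ (H - 1 / 2)) := by
    intro δ hδ s hs hsδ
    set B : ℝ → ℝ := fun u =>
      (C / (H - 1 / 2)) * ((u - t) ^ (H - 1 / 2) - (s - t) ^ (H - 1 / 2)) with hBdef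
    have hBderiv : ∀ u, t < u → HasDerivAt B (C * (u - t) ^ (H - 3 / 2)) u := by
      intro u hu
      have h1 : HasDerivAt (fun u : ℝ => u - t) 1 u := (hasDerivAt_id u).sub_const t
      have h2 : HasDerivAt (fun u : ℝ => (u - t) ^ (H - 1 / 2))
          (1 * (H - 1 / 2) * (u - t) ^ (H - 1 / 2 - 1)) u :=
        h1.rpow_const (Or.inl (ne_of_gt (sub_pos.2 hu)))
      have h3 := (h2.sub_const ((s - t) ^ (H - 1 / 2))).const_mul (C / (H - 1 / 2))
      convert h3 using 1
      · rfl
      · rfl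
      have : H - 1 / 2 - 1 = H - 3 / 2 := by ring
      rw [this, one_mul, ← mul_assoc, div_mul_cancel₀ _ hq]
    have hmain := image_norm_le_of_norm_deriv_right_le_deriv_boundary'
      (f := fun u => k u - k s) (f' := k') (a := s) (b := t + δ)
      (B := B) (B' := fun u => C * (u - t) ^ (H - 3 / 2))
      (fun u hu => (((hderiv u (lt_of_lt_of_le hs hu.1)).sub_const
        (k s)).continuousAt).continuousWithinAt)
      (fun u hu => ((hderiv u (lt_of_lt_of_le hs hu.1)).sub_const
        (k s)).hasDerivWithinAt)
      (by simp [hBdef])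
      (fun u hu => (hBderiv u (lt_of_lt_of_le hs hu.1)).continuousAt.continuousWithinAt)
      (fun u hu => (hBderiv u (lt_of_lt_of_le hs hu.1)).hasDerivWithinAt)
      (fun u hu => hbound u (lt_of_lt_of_le hs hu.1))
    have := hmain (Set.right_mem_Icc.2 (by linarith))
    simpa [hBdef] using this
  -- squared pointwise estimate
  have key2 : ∀ δ : ℝ, 0 < δ → ∀ s ∈ Set.Ioc t (t + δ),
      ‖k (max s (t + δ)) - k s‖ ^ 2 ≤
        (C / |H - 1 / 2|) ^ 2 * ((s - t) ^ (2 * H - 1) + δ ^ (2 * H - 1)) := by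
    intro δ hδ s hs
    rcases hs with ⟨hs1, hs2⟩
    rw [max_eq_right hs2]
    have h1 := key δ hδ s hs1 hs2
    have hst : (0 : ℝ) < s - t := sub_pos.2 hs1
    have e1 : ((s - t) ^ (H - 1 / 2)) ^ 2 = (s - t) ^ (2 * H - 1) := by
      rw [← Real.rpow_natCast ((s - t) ^ (H - 1 / 2)) 2, ← Real.rpow_mul hst.le]
      norm_num; ring_nf
    have e2 : (δ ^ (H - 1 / 2)) ^ 2 = δ ^ (2 * H - 1) := by
      rw [← Real.rpow_natCast (δ ^ (H - 1 / 2)) 2, ← Real.rpow_mul hδ.le]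
      norm_num; ring_nf
    have hd : t + δ - t = δ := by ring
    rw [hd] at h1
    have hnn : (0 : ℝ) ≤ ‖k (t + δ) - k s‖ := norm_nonneg _
    have habs : (C / (H - 1 / 2)) ^ 2 = (C / |H - 1 / 2|) ^ 2 := by
      rw [div_pow, div_pow, sq_abs]
    have ha : (0 : ℝ) ≤ δ ^ (H - 1 / 2) := Real.rpow_nonneg hδ.le _
    have hb : (0 : ℝ) ≤ (s - t) ^ (H - 1 / 2) := Real.rpow_nonneg hst.le _
    have h2 : ‖k (t + δ) - k s‖ ^ 2 ≤
        ((C / (H - 1 / 2)) * (δ ^ (H - 1 / 2) - (s - t) ^ (H - 1 / 2))) ^ 2 := by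
      have h3 : (0:ℝ) ≤ (C / (H - 1/2)) * (δ ^ (H - 1/2) - (s - t) ^ (H - 1/2)) :=
        le_trans hnn h1
      nlinarith
    refine h2.trans ?_
    rw [mul_pow, habs, ← e1, ← e2]
    nlinarith [sq_nonneg (C / |H - 1/2|), mul_nonneg ha hb,
      sq_nonneg (C / |H - 1/2|) , mul_nonneg (mul_nonneg (sq_nonneg (C / |H - 1/2|)) ha) hb]
  -- the main estimate
  have main : ∀ δ : ℝ, 0 < δ → δ ≤ T - t →
      ∫ s in t..T, ‖k (max s (t + δ)) - k s‖ ^ 2 ≤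
        (C / |H - 1 / 2|) ^ 2 * (1 + 1 / (2 * H)) * δ ^ (2 * H) := by
    intro δ hδ hδT
    have htδ : t < t + δ := by linarith
    have hδT' : t + δ ≤ T := by linarith
    set f : ℝ → ℝ := fun s => ‖k (max s (t + δ)) - k s‖ ^ 2 with hfdef
    set g : ℝ → ℝ := fun s =>
      (C / |H - 1 / 2|) ^ 2 * ((s - t) ^ (2 * H - 1) + δ ^ (2 * H - 1)) with hgdef
    have hfc : ∀ s, t < s → ContinuousAt f s := by
      intro s hs
      have h1 : ContinuousAt k s := (hderiv s hs).continuousAt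
      have hm : ContinuousAt (fun s : ℝ => max s (t + δ)) s :=
        (continuous_id.max continuous_const).continuousAt
      have h2 : ContinuousAt (fun s : ℝ => k (max s (t + δ))) s :=
        ContinuousAt.comp
          ((hderiv _ (lt_of_lt_of_le htδ (le_max_right s (t + δ)))).continuousAt) hm
      exact ((h2.sub h1).norm).pow 2
    have hrpow : IntervalIntegrable (fun s : ℝ => (s - t) ^ (2 * H - 1)) volume t (t + δ) := by
      have h := (intervalIntegral.intervalIntegrable_rpow' (a := 0) (b := δ) hp).comp_sub_right t
      simpa [add_comm] using h
    -- integrability of g on [t, t+δ]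
    have ig : IntervalIntegrable g volume t (t + δ) := by
      apply IntervalIntegrable.const_mul
      apply IntervalIntegrable.add
      · exact hrpow
      · exact intervalIntegrable_const
    -- integrability of f on [t, t+δ]
    have i1 : IntegrableOn f (Set.Ioc t (t + δ)) volume := by
      apply Integrable.mono' (ig.1)
      · exact ContinuousOn.aestronglyMeasurable
          (fun s hs => (hfc s hs.1).continuousWithinAt) measurableSet_Ioc
      · refine (ae_restrict_iff' measurableSet_Ioc).2 (ae_of_all _ fun s hs => ?_)
        rw [Real.norm_of_nonneg (by positivity)]
        exact key2 δ hδ s hs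
    have i1' : IntervalIntegrable f volume t (t + δ) :=
      (intervalIntegrable_iff_integrableOn_Ioc_of_le htδ.le).2 i1
    have i2 : IntervalIntegrable f volume (t + δ) T := by
      apply ContinuousOn.intervalIntegrable
      intro s hs
      rw [Set.uIcc_of_le hδT'] at hs
      exact (hfc s (lt_of_lt_of_le htδ hs.1)).continuousWithinAt
    have hsplit : ∫ s in t..T, f s = (∫ s in t..(t + δ), f s) + ∫ s in (t + δ)..T, f s :=
      (intervalIntegral.integral_add_adjacent_intervals i1' i2).symm
    have hzero : ∫ s in (t + δ)..T, f s = 0 := by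
      rw [intervalIntegral.integral_congr (g := fun _ => (0 : ℝ))
        (fun s hs => by
          rw [Set.uIcc_of_le hδT'] at hs
          simp [hfdef, max_eq_left hs.1])]
      simp
    have hmono : ∫ s in t..(t + δ), f s ≤ ∫ s in t..(t + δ), g s := by
      rw [intervalIntegral.integral_of_le htδ.le, intervalIntegral.integral_of_le htδ.le]
      exact setIntegral_mono_on i1 ig.1 measurableSet_Ioc (key2 δ hδ)
    have hgval : ∫ s in t..(t + δ), g s =
        (C / |H - 1 / 2|) ^ 2 * (1 + 1 / (2 * H)) * δ ^ (2 * H) := by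
      rw [hgdef]
      rw [intervalIntegral.integral_const_mul]
      rw [intervalIntegral.integral_add hrpow intervalIntegrable_const]
      have h1 : (∫ s in t..(t + δ), (s - t) ^ (2 * H - 1)) = δ ^ (2 * H) / (2 * H) := by
        rw [intervalIntegral.integral_comp_sub_right (fun x => x ^ (2 * H - 1)) t]
        simp only [sub_self, add_sub_cancel_left]
        rw [integral_rpow (Or.inl hp)]
        rw [Real.zero_rpow (by linarith : 2 * H - 1 + 1 ≠ 0)]
        norm_num
      rw [h1, intervalIntegral.integral_const]
      have h2 : δ ^ (2 * H - 1) * δ = δ ^ (2 * H) := by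
        rw [← Real.rpow_add_one hδ.ne' (2 * H - 1)]
        norm_num
      rw [smul_eq_mul, add_sub_cancel_left]
      rw [mul_comm δ (δ ^ (2 * H - 1)), h2]
      have h2H : (2 : ℝ) * H ≠ 0 := by positivity
      field_simp
      ring
    calc ∫ s in t..T, f s = (∫ s in t..(t + δ), f s) + ∫ s in (t + δ)..T, f s := hsplit
      _ = ∫ s in t..(t + δ), f s := by rw [hzero, add_zero]
      _ ≤ ∫ s in t..(t + δ), g s := hmono
      _ = (C / |H - 1 / 2|) ^ 2 * (1 + 1 / (2 * H)) * δ ^ (2 * H) := hgval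
  refine ⟨main, ?_⟩
  -- the limit
  rcases eq_or_lt_of_le hT with hTt | hTt
  · have : (fun δ : ℝ => ∫ s in t..T, ‖k (max s (t + δ)) - k s‖ ^ 2) = fun _ => 0 := by
      funext δ
      rw [← hTt]
      simp
    rw [this]
    exact tendsto_const_nhds
  · apply squeeze_zero' (g := fun δ : ℝ =>
      (C / |H - 1 / 2|) ^ 2 * (1 + 1 / (2 * H)) * δ ^ (2 * H))
    · exact Filter.Eventually.of_forall fun δ =>
        intervalIntegral.integral_nonneg hT (fun u _ => by positivity)
    · have h1 : ∀ᶠ δ : ℝ in nhdsWithin 0 (Set.Ioi 0), δ < T - t :=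
        eventually_nhdsWithin_of_eventually_nhds
          (eventually_lt_nhds (by linarith : (0 : ℝ) < T - t))
      have h2 : ∀ᶠ δ : ℝ in nhdsWithin 0 (Set.Ioi 0), δ ∈ Set.Ioi (0 : ℝ) :=
        self_mem_nhdsWithin
      filter_upwards [h1, h2] with δ hδ1 hδ2
      exact main δ hδ2 hδ1.le
    · have hr : Filter.Tendsto (fun δ : ℝ => δ ^ (2 * H)) (nhds 0) (nhds 0) := by
        have := (Real.continuousAt_rpow_const 0 (2 * H)
          (Or.inr (by positivity))).tendsto
        simpa [Real.zero_rpow (by positivity : (2 : ℝ) * H ≠ 0)] using this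
      have := hr.const_mul ((C / |H - 1 / 2|) ^ 2 * (1 + 1 / (2 * H)))
      rw [mul_zero] at this
      exact this.mono_left nhdsWithin_le_nhds
end

section
/- Let σ ≥ 0, p ≥ 1, κ ≥ 0, C > 0 and θ, θ̄ ∈ ℝ, and let h : ℝ → ℝ be continuously differentiable with |h'(x)| ≤ C (1 + e^{κ x}) for all x ∈ ℝ. Let μ be the Gaussian measure on ℝ with mean 0 and variance σ². Then ∫ |h(θ̄ + x) − h(θ + x)|^p dμ(x) ≤ |θ̄ − θ|^p · 3^{p−1} C^p · (1 + (e^{p κ θ} + e^{p κ θ̄}) e^{p² κ² σ²/2}). -/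
open MeasureTheory ProbabilityTheory
open Real
open scoped NNReal ENNReal

lemma gauss_key (v : ℝ≥0) (hv : v ≠ 0) (t x : ℝ) :
    Real.exp (t * x) * gaussianPDFReal 0 v x
      = Real.exp ((v : ℝ) * t ^ 2 / 2) * gaussianPDFReal ((v : ℝ) * t) v x := by
  have hvpos : (0:ℝ) < v := lt_of_le_of_ne v.coe_nonneg (by exact_mod_cast (Ne.symm hv))
  simp only [gaussianPDFReal]
  rw [mul_comm (Real.exp (t*x)), mul_assoc, ← Real.exp_add, mul_left_comm (rexp _),
    ← Real.exp_add]
  congr 2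
  field_simp
  ring

lemma gauss_integrable_exp (v : ℝ≥0) (t : ℝ) :
    Integrable (fun x => Real.exp (t * x)) (gaussianReal 0 v) := by
  by_cases hv : v = 0
  · subst hv; refine ⟨(Real.continuous_exp.comp (continuous_const.mul continuous_id)).aestronglyMeasurable, ?_⟩
    rw [HasFiniteIntegral, gaussianReal_zero_var, lintegral_dirac' _ (by fun_prop)]
    exact ENNReal.coe_lt_top
  · rw [gaussianReal_of_var_ne_zero _ hv, gaussianPDF_def,
      integrable_withDensity_iff (measurable_gaussianPDFReal 0 v).ennreal_ofReal
        (Filter.Eventually.of_forall fun x => ENNReal.ofReal_lt_top)]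
    have : (fun x => Real.exp (t * x) * (ENNReal.ofReal (gaussianPDFReal 0 v x)).toReal)
        = fun x => Real.exp ((v : ℝ) * t ^ 2 / 2) * gaussianPDFReal ((v : ℝ) * t) v x := by
      ext x
      rw [ENNReal.toReal_ofReal (gaussianPDFReal_nonneg 0 v x), gauss_key v hv]
    rw [this]
    exact (integrable_gaussianPDFReal _ _).const_mul _

lemma gauss_integral_exp (v : ℝ≥0) (t : ℝ) :
    ∫ x, Real.exp (t * x) ∂(gaussianReal 0 v) = Real.exp ((v : ℝ) * t ^ 2 / 2) := by
  by_cases hv : v = 0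
  · subst hv; simp
  · rw [gaussianReal_of_var_ne_zero _ hv]
    have hpdf : gaussianPDF 0 v = fun x => ((gaussianPDFReal 0 v x).toNNReal : ℝ≥0∞) := rfl
    rw [hpdf, integral_withDensity_eq_integral_smul
      (measurable_gaussianPDFReal 0 v).real_toNNReal]
    have : (fun x => (gaussianPDFReal 0 v x).toNNReal • Real.exp (t * x))
        = fun x => Real.exp ((v : ℝ) * t ^ 2 / 2) * gaussianPDFReal ((v : ℝ) * t) v x := by
      ext x
      rw [NNReal.smul_def, smul_eq_mul, Real.coe_toNNReal _ (gaussianPDFReal_nonneg 0 v x),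
        mul_comm, gauss_key v hv]
    rw [this, integral_const_mul, integral_gaussianPDFReal_eq_one _ hv, mul_one]

lemma three_pow (p a b c : ℝ) (hp : 1 ≤ p) (ha : 0 ≤ a) (hb : 0 ≤ b) (hc : 0 ≤ c) :
    (a + b + c) ^ p ≤ 3 ^ (p - 1) * (a ^ p + b ^ p + c ^ p) := by
  have h := Real.rpow_arith_mean_le_arith_mean_rpow Finset.univ
    ![(1:ℝ)/3, 1/3, 1/3] ![3*a, 3*b, 3*c]
    (by intro i _; fin_cases i <;> norm_num)
    (by simp [Fin.sum_univ_three]; norm_num)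
    (by intro i _; fin_cases i <;> simp <;> positivity) hp
  simp only [Fin.sum_univ_three, Matrix.cons_val_zero, Matrix.cons_val_one, Matrix.head_cons,
    Matrix.cons_val_two, Matrix.tail_cons] at h
  have e1 : (1:ℝ)/3 * (3*a) + 1/3 * (3*b) + 1/3 * (3*c) = a + b + c := by ring
  rw [e1] at h
  have h3 : (0:ℝ) ≤ 3 := by norm_num
  have e2 : ∀ x : ℝ, 0 ≤ x → ((3:ℝ)*x) ^ p = 3 ^ p * x ^ p := fun x hx =>
    Real.mul_rpow h3 hx
  rw [e2 a ha, e2 b hb, e2 c hc] at h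
  have e3 : (3:ℝ) ^ (p-1) = 3 ^ p / 3 := by
    rw [Real.rpow_sub (by norm_num), Real.rpow_one]
  rw [e3]
  calc (a+b+c)^p ≤ 1/3 * (3^p * a^p) + 1/3 * (3^p * b^p) + 1/3 * (3^p * c^p) := h
    _ = 3^p/3 * (a^p + b^p + c^p) := by ring


/-- Lipschitz-type moment bound for a `C¹` function with derivative of exponential growth,
against a centered Gaussian measure of variance `σ²`:
`∫ |h(θ̄+x) − h(θ+x)|^p dμ(x) ≤ |θ̄−θ|^p 3^{p−1} C^p (1 + (e^{pκθ} + e^{pκθ̄}) e^{p²κ²σ²/2})`. -/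
theorem gaussian_moment_difference_exponential_growth (σ p κ C θ θb : ℝ)
    (hσ : 0 ≤ σ) (hp : 1 ≤ p) (hκ : 0 ≤ κ) (hC : 0 < C)
    (h : ℝ → ℝ) (hdiff : ContDiff ℝ 1 h)
    (hbound : ∀ x, |deriv h x| ≤ C * (1 + Real.exp (κ * x))) :
    ∫ x, |h (θb + x) - h (θ + x)| ^ p ∂(gaussianReal 0 (σ ^ 2).toNNReal) ≤
      |θb - θ| ^ p * (3 ^ (p - 1) * C ^ p *
        (1 + (Real.exp (p * κ * θ) + Real.exp (p * κ * θb)) *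
          Real.exp (p ^ 2 * κ ^ 2 * σ ^ 2 / 2))) := by
  set v : ℝ≥0 := (σ ^ 2).toNNReal with hvdef
  have hvc : (v : ℝ) = σ ^ 2 := Real.coe_toNNReal _ (sq_nonneg σ)
  set A := Real.exp (κ * θ) with hA
  set B := Real.exp (κ * θb) with hB
  have hA0 : 0 < A := Real.exp_pos _
  have hB0 : 0 < B := Real.exp_pos _
  set D := |θb - θ| ^ p * (3 ^ (p - 1) * C ^ p) with hD
  have hD0 : 0 ≤ D := by
    apply mul_nonneg (Real.rpow_nonneg (abs_nonneg _) p)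
    exact mul_nonneg (Real.rpow_nonneg (by norm_num) _) (Real.rpow_nonneg hC.le _)
  -- step 1: pointwise Lipschitz-type bound
  have step1 : ∀ x : ℝ, |h (θb + x) - h (θ + x)|
      ≤ (C * (1 + (A + B) * Real.exp (κ * x))) * |θb - θ| := by
    intro x
    set M := C * (1 + (A + B) * Real.exp (κ * x)) with hM
    have hderiv : ∀ t ∈ Set.uIcc θ θb,
        HasDerivWithinAt (fun t => h (t + x)) (deriv h (t + x)) (Set.uIcc θ θb) t := by
      intro t _
      have h1 : HasDerivAt (fun t : ℝ => t + x) 1 t := (hasDerivAt_id t).add_const x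
      have h2 : HasDerivAt h (deriv h (t + x)) (t + x) :=
        ((hdiff.differentiable one_ne_zero) (t + x)).hasDerivAt
      simpa [Function.comp_def] using (h2.comp t h1).hasDerivWithinAt
    have hbnd : ∀ t ∈ Set.uIcc θ θb, ‖deriv h (t + x)‖ ≤ M := by
      intro t ht
      rw [Real.norm_eq_abs]
      refine (hbound (t + x)).trans ?_
      rw [hM]
      have ht' : t ≤ max θ θb := by
        rcases Set.mem_uIcc.mp ht with ⟨_, h2⟩ | ⟨_, h2⟩
        · exact h2.trans (le_max_right _ _)
        · exact h2.trans (le_max_left _ _)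
      have hexp : Real.exp (κ * (t + x)) ≤ (A + B) * Real.exp (κ * x) := by
        rw [mul_add, Real.exp_add, hA, hB]
        have : Real.exp (κ * t) ≤ A + B := by
          have : Real.exp (κ * t) ≤ Real.exp (κ * max θ θb) :=
            Real.exp_le_exp.mpr (mul_le_mul_of_nonneg_left ht' hκ)
          refine this.trans ?_
          rcases max_cases θ θb with ⟨he, _⟩ | ⟨he, _⟩ <;> rw [he]
          · exact le_add_of_nonneg_right hB0.le
          · exact le_add_of_nonneg_left hA0.le
        exact mul_le_mul_of_nonneg_right this (Real.exp_pos _).le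
      nlinarith [Real.exp_pos (κ * (t + x))]
    have key := (convex_uIcc θ θb).norm_image_sub_le_of_norm_hasDerivWithin_le
      hderiv hbnd Set.left_mem_uIcc Set.right_mem_uIcc
    simpa [Real.norm_eq_abs] using key
  -- step 2: pointwise rpow bound
  have step2 : ∀ x : ℝ, |h (θb + x) - h (θ + x)| ^ p
      ≤ D + D * (A ^ p + B ^ p) * Real.exp ((p * κ) * x) := by
    intro x
    set E := Real.exp (κ * x) with hE
    have hE0 : 0 < E := Real.exp_pos _
    have h1 : |h (θb + x) - h (θ + x)| ^ p
        ≤ ((C * (1 + (A + B) * E)) * |θb - θ|) ^ p := by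
      apply Real.rpow_le_rpow (abs_nonneg _) (step1 x) (by linarith)
    refine h1.trans ?_
    have hMn : 0 ≤ C * (1 + (A + B) * E) := by positivity
    rw [Real.mul_rpow hMn (abs_nonneg _), Real.mul_rpow hC.le (by positivity)]
    have h3 : (1 + (A + B) * E) ^ p ≤ 3 ^ (p - 1) * (1 + (A * E) ^ p + (B * E) ^ p) := by
      have := three_pow p 1 (A * E) (B * E) hp (by norm_num) (by positivity) (by positivity)
      simpa [add_mul, Real.one_rpow, add_assoc] using this
    have hEp : E ^ p = Real.exp ((p * κ) * x) := by
      rw [hE, ← Real.exp_mul]; ring_nf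
    have h4 : (A * E) ^ p = A ^ p * Real.exp ((p * κ) * x) := by
      rw [Real.mul_rpow hA0.le hE0.le, hEp]
    have h5 : (B * E) ^ p = B ^ p * Real.exp ((p * κ) * x) := by
      rw [Real.mul_rpow hB0.le hE0.le, hEp]
    calc C ^ p * (1 + (A + B) * E) ^ p * |θb - θ| ^ p
        ≤ C ^ p * (3 ^ (p - 1) * (1 + (A * E) ^ p + (B * E) ^ p)) * |θb - θ| ^ p := by
          apply mul_le_mul_of_nonneg_right _ (Real.rpow_nonneg (abs_nonneg _) p)
          exact mul_le_mul_of_nonneg_left h3 (Real.rpow_nonneg hC.le _)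
      _ = D + D * (A ^ p + B ^ p) * Real.exp ((p * κ) * x) := by
          rw [h4, h5, hD]; ring
  -- integrability of the majorant
  have hint : Integrable
      (fun x => D + D * (A ^ p + B ^ p) * Real.exp ((p * κ) * x)) (gaussianReal 0 v) :=
    (integrable_const _).add ((gauss_integrable_exp v (p * κ)).const_mul _)
  have hmono := integral_mono_of_nonneg
    (Filter.Eventually.of_forall fun x => Real.rpow_nonneg (abs_nonneg _) p)
    hint (Filter.Eventually.of_forall step2)
  refine hmono.trans ?_
  rw [integral_add (integrable_const _) ((gauss_integrable_exp v (p * κ)).const_mul _),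
    integral_const, integral_const_mul, gauss_integral_exp]
  have hmu : (gaussianReal 0 v) Set.univ = 1 := measure_univ
  rw [Measure.real, hmu]
  have e1 : (v : ℝ) * (p * κ) ^ 2 / 2 = p ^ 2 * κ ^ 2 * σ ^ 2 / 2 := by rw [hvc]; ring
  have e2 : A ^ p = Real.exp (p * κ * θ) := by rw [hA, ← Real.exp_mul]; ring_nf
  have e3 : B ^ p = Real.exp (p * κ * θb) := by rw [hB, ← Real.exp_mul]; ring_nf
  rw [e1, e2, e3, hD]
  simp only [ENNReal.toReal_one, smul_eq_mul, one_mul]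
  ring_nf
  exact le_rfl
end

section
/- Let (Ω, ℱ, μ) be a probability space, p ≥ 1, κ ≥ 1 and C > 0, and let g : ℝ → ℝ be continuously differentiable with |g(x)| ≤ C (1 + |x|^κ) and |g'(x)| ≤ C (1 + |x|^κ) for all x ∈ ℝ. Let X and (X_n)_{n ∈ ℕ} be real random variables such that sup_n E[|X_n|^{4pκ}] < ∞, E[|X|^{4pκ}] < ∞, and E[|X_n − X|^{2p}] → 0 as n → ∞. Then E[ |∫₀¹ g(λ X_n + (1−λ) X) dλ − g(X)|^p ] → 0 as n → ∞. -/
open MeasureTheory intervalIntegral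

section Aux

lemma avg_ptwise {p κ C : ℝ} (hp : 1 ≤ p) (hκ : 1 ≤ κ) (hC : 0 < C)
    {g : ℝ → ℝ} (hg : ContDiff ℝ 1 g)
    (hg'b : ∀ x, |deriv g x| ≤ C * (1 + |x| ^ κ)) (a b : ℝ) :
    |(∫ l in (0:ℝ)..1, g (l * a + (1 - l) * b)) - g b| ^ p ≤
      C ^ p * ((1 + (|a| + |b|) ^ κ) ^ p * |a - b| ^ p) := by
  have hκ0 : (0:ℝ) < κ := lt_of_lt_of_le one_pos hκ
  set R : ℝ := |a| + |b| with hR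
  have hR0 : 0 ≤ R := by positivity
  set K : ℝ := C * (1 + R ^ κ) with hKdef
  have hK0 : 0 ≤ K := by positivity
  have hgc : Continuous g := hg.continuous
  have hcont : Continuous fun l : ℝ => g (l * a + (1 - l) * b) := by continuity
  have hinteg : IntervalIntegrable (fun l : ℝ => g (l * a + (1 - l) * b)) volume 0 1 :=
    hcont.intervalIntegrable 0 1
  have hsub : (∫ l in (0:ℝ)..1, g (l * a + (1 - l) * b)) - g b
      = ∫ l in (0:ℝ)..1, (g (l * a + (1 - l) * b) - g b) := by
    rw [intervalIntegral.integral_sub hinteg (intervalIntegrable_const)]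
    simp
  have step1 : |(∫ l in (0:ℝ)..1, g (l * a + (1 - l) * b)) - g b| ≤ K * |a - b| := by
    rw [hsub]
    have hb : ∀ l ∈ Set.uIoc (0:ℝ) 1, ‖g (l * a + (1 - l) * b) - g b‖ ≤ K * |a - b| := by
      intro l hl
      rw [Set.uIoc_of_le zero_le_one] at hl
      obtain ⟨hl0, hl1⟩ := hl
      have hmem : ∀ z : ℝ, |z| ≤ R → z ∈ Set.Icc (-R) R := fun z hz => abs_le.1 hz
      have hy : |l * a + (1 - l) * b| ≤ R := by
        calc |l * a + (1 - l) * b| ≤ |l * a| + |(1 - l) * b| := abs_add_le _ _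
          _ = |l| * |a| + |1 - l| * |b| := by rw [abs_mul, abs_mul]
          _ = l * |a| + (1 - l) * |b| := by
              rw [abs_of_pos hl0, abs_of_nonneg (by linarith : (0:ℝ) ≤ 1 - l)]
          _ ≤ R := by nlinarith [abs_nonneg a, abs_nonneg b]
      have hbmem : b ∈ Set.Icc (-R) R := hmem b (le_add_of_nonneg_left (abs_nonneg a))
      have hymem : l * a + (1 - l) * b ∈ Set.Icc (-R) R := hmem _ hy
      have hbound : ∀ w ∈ Set.Icc (-R) R, ‖deriv g w‖ ≤ K := by
        intro w hw
        have hwR : |w| ≤ R := abs_le.2 hw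
        calc ‖deriv g w‖ = |deriv g w| := rfl
          _ ≤ C * (1 + |w| ^ κ) := hg'b w
          _ ≤ K := by
              rw [hKdef]
              have : |w| ^ κ ≤ R ^ κ := Real.rpow_le_rpow (abs_nonneg w) hwR hκ0.le
              nlinarith
      have hdiff : ∀ w ∈ Set.Icc (-R) R, DifferentiableAt ℝ g w := fun w _ =>
        (hg.differentiable one_ne_zero) w
      have := (convex_Icc (-R) R).norm_image_sub_le_of_norm_deriv_le hdiff hbound hbmem hymem
      calc ‖g (l * a + (1 - l) * b) - g b‖ ≤ K * ‖l * a + (1 - l) * b - b‖ := this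
        _ = K * (l * |a - b|) := by
            rw [show l * a + (1 - l) * b - b = l * (a - b) by ring]
            rw [Real.norm_eq_abs, abs_mul, abs_of_pos hl0]
        _ ≤ K * |a - b| := by nlinarith [mul_nonneg (mul_nonneg hK0 (abs_nonneg (a - b))) (by linarith : (0:ℝ) ≤ 1 - l)]
    have := intervalIntegral.norm_integral_le_of_norm_le_const hb
    simpa using this
  calc |(∫ l in (0:ℝ)..1, g (l * a + (1 - l) * b)) - g b| ^ p
      ≤ (K * |a - b|) ^ p :=
        Real.rpow_le_rpow (abs_nonneg _) step1 (by linarith)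
    _ = C ^ p * ((1 + R ^ κ) ^ p * |a - b| ^ p) := by
        rw [hKdef, Real.mul_rpow (by positivity) (abs_nonneg _),
          Real.mul_rpow hC.le (by positivity), mul_assoc]

lemma integral_mul_le_sqrt_mul_sqrt {Ω : Type*} [MeasurableSpace Ω] (μ : Measure Ω)
    {f h : Ω → ℝ} (hfm : AEStronglyMeasurable f μ) (hhm : AEStronglyMeasurable h μ)
    (hf0 : ∀ ω, 0 ≤ f ω) (hh0 : ∀ ω, 0 ≤ h ω)
    (hf2 : Integrable (fun ω => f ω ^ (2:ℝ)) μ)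
    (hh2 : Integrable (fun ω => h ω ^ (2:ℝ)) μ) :
    ∫ ω, f ω * h ω ∂μ ≤
      (∫ ω, f ω ^ (2:ℝ) ∂μ) ^ (1/2:ℝ) * (∫ ω, h ω ^ (2:ℝ) ∂μ) ^ (1/2:ℝ) := by
  have hconj : Real.HolderConjugate 2 2 := Real.HolderConjugate.two_two
  have hF : AEMeasurable (fun ω => ENNReal.ofReal (f ω)) μ :=
    ENNReal.measurable_ofReal.comp_aemeasurable hfm.aemeasurable
  have hH : AEMeasurable (fun ω => ENNReal.ofReal (h ω)) μ :=
    ENNReal.measurable_ofReal.comp_aemeasurable hhm.aemeasurable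
  have key := ENNReal.lintegral_mul_le_Lp_mul_Lq μ hconj hF hH
  have hIf0 : 0 ≤ ∫ ω, f ω ^ (2:ℝ) ∂μ :=
    integral_nonneg fun ω => Real.rpow_nonneg (hf0 ω) _
  have hIh0 : 0 ≤ ∫ ω, h ω ^ (2:ℝ) ∂μ :=
    integral_nonneg fun ω => Real.rpow_nonneg (hh0 ω) _
  have hfsq' : (∫⁻ ω, ENNReal.ofReal (f ω) ^ (2:ℝ) ∂μ)
      = ∫⁻ ω, ENNReal.ofReal (f ω ^ (2:ℝ)) ∂μ := by
    congr 1; funext ω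
    rw [← ENNReal.ofReal_rpow_of_nonneg (hf0 ω) (by norm_num)]
  have hhsq' : (∫⁻ ω, ENNReal.ofReal (h ω) ^ (2:ℝ) ∂μ)
      = ∫⁻ ω, ENNReal.ofReal (h ω ^ (2:ℝ)) ∂μ := by
    congr 1; funext ω
    rw [← ENNReal.ofReal_rpow_of_nonneg (hh0 ω) (by norm_num)]
  have hfint : ∫⁻ ω, ENNReal.ofReal (f ω ^ (2:ℝ)) ∂μ
      = ENNReal.ofReal (∫ ω, f ω ^ (2:ℝ) ∂μ) :=
    (ofReal_integral_eq_lintegral_ofReal hf2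
      (Filter.Eventually.of_forall fun ω => Real.rpow_nonneg (hf0 ω) _)).symm
  have hhint : ∫⁻ ω, ENNReal.ofReal (h ω ^ (2:ℝ)) ∂μ
      = ENNReal.ofReal (∫ ω, h ω ^ (2:ℝ) ∂μ) :=
    (ofReal_integral_eq_lintegral_ofReal hh2
      (Filter.Eventually.of_forall fun ω => Real.rpow_nonneg (hh0 ω) _)).symm
  have hmulfun : ∀ ω, ENNReal.ofReal (f ω * h ω)
      = ENNReal.ofReal (f ω) * ENNReal.ofReal (h ω) := fun ω =>
    ENNReal.ofReal_mul (hf0 ω)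
  have key2 : (∫⁻ ω, ENNReal.ofReal (f ω * h ω) ∂μ) ≤
      ENNReal.ofReal ((∫ ω, f ω ^ (2:ℝ) ∂μ) ^ (1/2:ℝ) * (∫ ω, h ω ^ (2:ℝ) ∂μ) ^ (1/2:ℝ)) := by
    calc (∫⁻ ω, ENNReal.ofReal (f ω * h ω) ∂μ)
        = ∫⁻ ω, (fun ω => ENNReal.ofReal (f ω)) ω * (fun ω => ENNReal.ofReal (h ω)) ω ∂μ := by
          simp only [hmulfun]
      _ ≤ (∫⁻ ω, ENNReal.ofReal (f ω) ^ (2:ℝ) ∂μ) ^ (1/2:ℝ) *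
          (∫⁻ ω, ENNReal.ofReal (h ω) ^ (2:ℝ) ∂μ) ^ (1/2:ℝ) := key
      _ = ENNReal.ofReal ((∫ ω, f ω ^ (2:ℝ) ∂μ) ^ (1/2:ℝ) * (∫ ω, h ω ^ (2:ℝ) ∂μ) ^ (1/2:ℝ)) := by
          rw [hfsq', hhsq', hfint, hhint,
            ENNReal.ofReal_mul (Real.rpow_nonneg hIf0 _),
            ENNReal.ofReal_rpow_of_nonneg hIf0 (by norm_num),
            ENNReal.ofReal_rpow_of_nonneg hIh0 (by norm_num)]
  rw [integral_eq_lintegral_of_nonneg_ae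
    (Filter.Eventually.of_forall fun ω => mul_nonneg (hf0 ω) (hh0 ω)) (hfm.mul hhm)]
  calc (∫⁻ ω, ENNReal.ofReal (f ω * h ω) ∂μ).toReal
      ≤ (ENNReal.ofReal ((∫ ω, f ω ^ (2:ℝ) ∂μ) ^ (1/2:ℝ) *
          (∫ ω, h ω ^ (2:ℝ) ∂μ) ^ (1/2:ℝ))).toReal :=
        ENNReal.toReal_mono ENNReal.ofReal_ne_top key2
    _ = _ := ENNReal.toReal_ofReal (mul_nonneg (Real.rpow_nonneg hIf0 _) (Real.rpow_nonneg hIh0 _))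

lemma growth_sq {p κ : ℝ} (hp : 1 ≤ p) (hκ : 1 ≤ κ) (a b : ℝ) :
    ((1 + (|a| + |b|) ^ κ) ^ p) ^ (2:ℝ) ≤
      2 ^ (2*p) * 3 ^ (2*p*κ) * (3 + |a| ^ (4*p*κ) + |b| ^ (4*p*κ)) := by
  have hp0 : (0:ℝ) < p := lt_of_lt_of_le one_pos hp
  have hκ0 : (0:ℝ) < κ := lt_of_lt_of_le one_pos hκ
  set x : ℝ := |a| with hxd
  set y : ℝ := |b| with hyd
  have hx : 0 ≤ x := abs_nonneg a
  have hy : 0 ≤ y := abs_nonneg b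
  have hbase0 : (0:ℝ) ≤ 1 + (x + y) ^ κ := by positivity
  set D : ℝ := 1 + x + y with hDd
  have hD1 : (1:ℝ) ≤ D := by simp only [hDd]; linarith
  have hD0 : (0:ℝ) ≤ D := by linarith
  set M : ℝ := max 1 (max x y) with hMd
  have hM1 : (1:ℝ) ≤ M := le_max_left _ _
  have hDM : D ≤ 3 * M := by
    have h1 : (1:ℝ) ≤ M := hM1
    have h2 : x ≤ M := le_trans (le_max_left x y) (le_max_right _ _)
    have h3 : y ≤ M := le_trans (le_max_right x y) (le_max_right _ _)
    simp only [hDd]; linarith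
  have hMkey : M ^ (2*p*κ) ≤ 1 + x ^ (4*p*κ) + y ^ (4*p*κ) := by
    have hexp : 2*p*κ ≤ 4*p*κ := by nlinarith
    have hx4 : 0 ≤ x ^ (4*p*κ) := Real.rpow_nonneg hx _
    have hy4 : 0 ≤ y ^ (4*p*κ) := Real.rpow_nonneg hy _
    rcases le_total (max x y) 1 with hcase | hcase
    · have : M = 1 := max_eq_left hcase
      rw [this, Real.one_rpow]; linarith
    · have hMeq : M = max x y := max_eq_right hcase
      rcases le_total x y with hxy | hxy
      · have : M = y := by rw [hMeq, max_eq_right hxy]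
        rw [this]
        calc y ^ (2*p*κ) ≤ y ^ (4*p*κ) :=
              Real.rpow_le_rpow_of_exponent_le (by rw [← this]; exact hM1) hexp
          _ ≤ 1 + x ^ (4*p*κ) + y ^ (4*p*κ) := by linarith
      · have : M = x := by rw [hMeq, max_eq_left hxy]
        rw [this]
        calc x ^ (2*p*κ) ≤ x ^ (4*p*κ) :=
              Real.rpow_le_rpow_of_exponent_le (by rw [← this]; exact hM1) hexp
          _ ≤ 1 + x ^ (4*p*κ) + y ^ (4*p*κ) := by linarith
  have h1 : 1 + (x + y) ^ κ ≤ 2 * D ^ κ := by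
    have ha : x + y ≤ D := by simp only [hDd]; linarith
    have hb : (x + y) ^ κ ≤ D ^ κ := Real.rpow_le_rpow (by positivity) ha hκ0.le
    have hc : (1:ℝ) ≤ D ^ κ := Real.one_le_rpow hD1 hκ0.le
    linarith
  calc ((1 + (x + y) ^ κ) ^ p) ^ (2:ℝ)
      = (1 + (x + y) ^ κ) ^ (p * 2) := (Real.rpow_mul hbase0 p 2).symm
    _ ≤ (2 * D ^ κ) ^ (p * 2) := Real.rpow_le_rpow hbase0 h1 (by positivity)
    _ = 2 ^ (p * 2) * (D ^ κ) ^ (p * 2) := Real.mul_rpow (by norm_num) (by positivity)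
    _ = 2 ^ (2 * p) * D ^ (2 * p * κ) := by
        rw [← Real.rpow_mul hD0, show κ * (p * 2) = 2*p*κ by ring, show p * 2 = 2 * p by ring]
    _ ≤ 2 ^ (2 * p) * ((3 * M) ^ (2*p*κ)) := by
        have := Real.rpow_le_rpow hD0 hDM (by positivity : (0:ℝ) ≤ 2*p*κ)
        have h2 : (0:ℝ) ≤ 2 ^ (2*p) := by positivity
        nlinarith [this]
    _ = 2 ^ (2 * p) * (3 ^ (2*p*κ) * M ^ (2*p*κ)) := by
        rw [Real.mul_rpow (by norm_num) (by linarith : (0:ℝ) ≤ M)]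
    _ ≤ 2 ^ (2 * p) * (3 ^ (2*p*κ) * (1 + x ^ (4*p*κ) + y ^ (4*p*κ))) := by
        have h2 : (0:ℝ) ≤ 2 ^ (2*p) := by positivity
        have h3 : (0:ℝ) ≤ (3:ℝ) ^ (2*p*κ) := by positivity
        exact mul_le_mul_of_nonneg_left (mul_le_mul_of_nonneg_left hMkey h3) h2
    _ ≤ 2 ^ (2*p) * 3 ^ (2*p*κ) * (3 + x ^ (4*p*κ) + y ^ (4*p*κ)) := by
        have h2 : (0:ℝ) ≤ 2 ^ (2*p) := by positivity
        have h3 : (0:ℝ) ≤ (3:ℝ) ^ (2*p*κ) := by positivity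
        nlinarith

end Aux

/-- Convergence of the averaged discretized derivative: if `g ∈ C¹` with `g` and `g'` of
polynomial growth of order `κ`, `sup_n E[|X_n|^{4pκ}] < ∞`, `E[|X|^{4pκ}] < ∞` and
`E[|X_n − X|^{2p}] → 0`, then `E[|∫₀¹ g(λ X_n + (1−λ) X) dλ − g(X)|^p] → 0`. -/
theorem averaged_derivative_tendsto {Ω : Type*} [MeasurableSpace Ω]
    (μ : Measure Ω) [IsProbabilityMeasure μ]
    (p κ C : ℝ) (hp : 1 ≤ p) (hκ : 1 ≤ κ) (hC : 0 < C)
    (g : ℝ → ℝ) (hg : ContDiff ℝ 1 g)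
    (hgb : ∀ x, |g x| ≤ C * (1 + |x| ^ κ))
    (hg'b : ∀ x, |deriv g x| ≤ C * (1 + |x| ^ κ))
    (X : ℕ → Ω → ℝ) (X₀ : Ω → ℝ) (hXn : ∀ n, Measurable (X n)) (hX : Measurable X₀)
    (hintn : ∀ n, Integrable (fun ω => |X n ω| ^ (4 * p * κ)) μ)
    (hint0 : Integrable (fun ω => |X₀ ω| ^ (4 * p * κ)) μ)
    (hbdd : ∃ M : ℝ, ∀ n, ∫ ω, |X n ω| ^ (4 * p * κ) ∂μ ≤ M)
    (hconvint : ∀ n, Integrable (fun ω => |X n ω - X₀ ω| ^ (2 * p)) μ)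
    (hconv : Filter.Tendsto (fun n => ∫ ω, |X n ω - X₀ ω| ^ (2 * p) ∂μ)
      Filter.atTop (nhds 0)) :
    Filter.Tendsto
      (fun n => ∫ ω,
        |(∫ l in (0:ℝ)..1, g (l * X n ω + (1 - l) * X₀ ω)) - g (X₀ ω)| ^ p ∂μ)
      Filter.atTop (nhds 0) := by
  obtain ⟨M, hM⟩ := hbdd
  have hp0 : (0:ℝ) < p := lt_of_lt_of_le one_pos hp
  have hκ0 : (0:ℝ) < κ := lt_of_lt_of_le one_pos hκ
  set A : ℕ → Ω → ℝ := fun n ω => (1 + (|X n ω| + |X₀ ω|) ^ κ) ^ p with hAd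
  set B : ℕ → Ω → ℝ := fun n ω => |X n ω - X₀ ω| ^ p with hBd
  have hA0 : ∀ n ω, 0 ≤ A n ω := fun n ω => Real.rpow_nonneg (by positivity) _
  have hB0 : ∀ n ω, 0 ≤ B n ω := fun n ω => Real.rpow_nonneg (abs_nonneg _) _
  -- measurability
  have hGc : Continuous fun q : ℝ × ℝ => ∫ l in (0:ℝ)..1, g (l * q.1 + (1 - l) * q.2) := by
    have huc : Continuous (Function.uncurry
        fun (q : ℝ × ℝ) (l : ℝ) => g (l * q.1 + (1 - l) * q.2)) := by
      apply hg.continuous.comp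
      fun_prop
    exact intervalIntegral.continuous_parametric_intervalIntegral_of_continuous' huc 0 1
  have hIm : ∀ n, Measurable fun ω =>
      (∫ l in (0:ℝ)..1, g (l * X n ω + (1 - l) * X₀ ω)) := fun n =>
    hGc.measurable.comp ((hXn n).prodMk hX)
  have hcabs : Continuous fun z : ℝ => |z| ^ p :=
    continuous_abs.rpow_const fun _ => Or.inr hp0.le
  have hφm : ∀ n, AEStronglyMeasurable (fun ω =>
      |(∫ l in (0:ℝ)..1, g (l * X n ω + (1 - l) * X₀ ω)) - g (X₀ ω)| ^ p) μ := fun n =>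
    (hcabs.measurable.comp ((hIm n).sub (hg.continuous.measurable.comp hX))).aestronglyMeasurable
  have hAm : ∀ n, Measurable (A n) := by
    intro n
    have hc : Continuous fun t : ℝ => (1 + t ^ κ) ^ p :=
      (continuous_const.add (continuous_id.rpow_const fun _ => Or.inr hκ0.le)).rpow_const
        fun _ => Or.inr hp0.le
    exact hc.measurable.comp ((hXn n).abs.add hX.abs)
  have hBm : ∀ n, Measurable (B n) := fun n =>
    hcabs.measurable.comp ((hXn n).sub hX)
  -- rpow square helper
  have hsq : ∀ z : ℝ, 0 ≤ z → z ^ (2:ℝ) = z * z := by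
    intro z hz
    rw [show (2:ℝ) = ((2:ℕ):ℝ) by norm_num, Real.rpow_natCast]
    ring
  -- integrability of A²
  set K2 : ℝ := 2 ^ (2*p) * 3 ^ (2*p*κ) with hK2d
  have hK20 : 0 ≤ K2 := by positivity
  have hdom : ∀ n, Integrable (fun ω =>
      K2 * (3 + |X n ω| ^ (4*p*κ) + |X₀ ω| ^ (4*p*κ))) μ := fun n =>
    (((integrable_const (3:ℝ)).add (hintn n)).add hint0).const_mul K2
  have hA2int : ∀ n, Integrable (fun ω => A n ω ^ (2:ℝ)) μ := by
    intro n
    have hm2 : Measurable fun ω => A n ω ^ (2:ℝ) :=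
      ((continuous_id.rpow_const fun _ => Or.inr (by norm_num : (0:ℝ) ≤ 2)).measurable).comp
        (hAm n)
    refine (hdom n).mono' hm2.aestronglyMeasurable
      (Filter.Eventually.of_forall fun ω => ?_)
    rw [Real.norm_eq_abs, abs_of_nonneg (Real.rpow_nonneg (hA0 n ω) _)]
    exact growth_sq hp hκ (X n ω) (X₀ ω)
  have hB2eq : ∀ n, (fun ω => B n ω ^ (2:ℝ)) = fun ω => |X n ω - X₀ ω| ^ (2*p) := by
    intro n
    funext ω
    rw [hBd]
    rw [← Real.rpow_mul (abs_nonneg _), show p * 2 = 2 * p by ring]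
  have hB2int : ∀ n, Integrable (fun ω => B n ω ^ (2:ℝ)) μ := by
    intro n; rw [hB2eq n]; exact hconvint n
  -- integrability of A * B
  have hABint : ∀ n, Integrable (fun ω => A n ω * B n ω) μ := by
    intro n
    refine ((hA2int n).add (hB2int n)).mono'
      ((hAm n).mul (hBm n)).aestronglyMeasurable
      (Filter.Eventually.of_forall fun ω => ?_)
    simp only [Pi.add_apply]
    rw [Real.norm_eq_abs, abs_of_nonneg (mul_nonneg (hA0 n ω) (hB0 n ω)),
      hsq _ (hA0 n ω), hsq _ (hB0 n ω)]
    nlinarith [sq_nonneg (A n ω - B n ω), hA0 n ω, hB0 n ω]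
  -- bound on ∫ A²
  set I₀ : ℝ := ∫ ω, |X₀ ω| ^ (4*p*κ) ∂μ with hI₀d
  set M' : ℝ := K2 * (3 + M + I₀) with hM'd
  have hA2bound : ∀ n, ∫ ω, A n ω ^ (2:ℝ) ∂μ ≤ M' := by
    intro n
    have h1 : ∫ ω, A n ω ^ (2:ℝ) ∂μ ≤
        ∫ ω, K2 * (3 + |X n ω| ^ (4*p*κ) + |X₀ ω| ^ (4*p*κ)) ∂μ := by
      refine integral_mono_of_nonneg
        (Filter.Eventually.of_forall fun ω => Real.rpow_nonneg (hA0 n ω) _)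
        (hdom n) (Filter.Eventually.of_forall fun ω => growth_sq hp hκ (X n ω) (X₀ ω))
    have h2 : ∫ ω, K2 * (3 + |X n ω| ^ (4*p*κ) + |X₀ ω| ^ (4*p*κ)) ∂μ
        = K2 * ((3:ℝ) + (∫ ω, |X n ω| ^ (4*p*κ) ∂μ) + I₀) := by
      have e1 : ∫ ω, ((3:ℝ) + |X n ω| ^ (4*p*κ)) + |X₀ ω| ^ (4*p*κ) ∂μ
          = (∫ ω, (3:ℝ) + |X n ω| ^ (4*p*κ) ∂μ) + ∫ ω, |X₀ ω| ^ (4*p*κ) ∂μ :=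
        integral_add ((integrable_const (3:ℝ)).add (hintn n)) hint0
      have e2 : ∫ ω, (3:ℝ) + |X n ω| ^ (4*p*κ) ∂μ
          = (∫ ω, (3:ℝ) ∂μ) + ∫ ω, |X n ω| ^ (4*p*κ) ∂μ :=
        integral_add (integrable_const _) (hintn n)
      rw [MeasureTheory.integral_const_mul, e1, e2, MeasureTheory.integral_const]
      simp [hI₀d, measure_univ]
    have h3 : K2 * ((3:ℝ) + (∫ ω, |X n ω| ^ (4*p*κ) ∂μ) + I₀) ≤ M' := by
      rw [hM'd]
      have := hM n
      nlinarith [hK20]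
    linarith
  -- main bound
  set J : ℕ → ℝ := fun n => ∫ ω, |X n ω - X₀ ω| ^ (2*p) ∂μ with hJd
  have hJ0 : ∀ n, 0 ≤ J n := fun n =>
    integral_nonneg fun ω => Real.rpow_nonneg (abs_nonneg _) _
  have hM'0 : 0 ≤ M' := le_trans (integral_nonneg fun ω => Real.rpow_nonneg (hA0 0 ω) _)
    (hA2bound 0)
  have hIle : ∀ n, (∫ ω,
      |(∫ l in (0:ℝ)..1, g (l * X n ω + (1 - l) * X₀ ω)) - g (X₀ ω)| ^ p ∂μ) ≤
      (C ^ p * M' ^ (1/2:ℝ)) * J n ^ (1/2:ℝ) := by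
    intro n
    have step1 : (∫ ω,
        |(∫ l in (0:ℝ)..1, g (l * X n ω + (1 - l) * X₀ ω)) - g (X₀ ω)| ^ p ∂μ) ≤
        ∫ ω, C ^ p * (A n ω * B n ω) ∂μ := by
      refine integral_mono_of_nonneg
        (Filter.Eventually.of_forall fun ω => Real.rpow_nonneg (abs_nonneg _) _)
        ((hABint n).const_mul _)
        (Filter.Eventually.of_forall fun ω => ?_)
      exact avg_ptwise hp hκ hC hg hg'b (X n ω) (X₀ ω)
    have step2 : ∫ ω, C ^ p * (A n ω * B n ω) ∂μ =
        C ^ p * ∫ ω, A n ω * B n ω ∂μ := MeasureTheory.integral_const_mul _ _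
    have step3 : ∫ ω, A n ω * B n ω ∂μ ≤
        (∫ ω, A n ω ^ (2:ℝ) ∂μ) ^ (1/2:ℝ) * (∫ ω, B n ω ^ (2:ℝ) ∂μ) ^ (1/2:ℝ) :=
      integral_mul_le_sqrt_mul_sqrt μ (hAm n).aestronglyMeasurable
        (hBm n).aestronglyMeasurable (hA0 n) (hB0 n) (hA2int n) (hB2int n)
    have hBJ : ∫ ω, B n ω ^ (2:ℝ) ∂μ = J n := by rw [hB2eq n]
    have step4 : (∫ ω, A n ω ^ (2:ℝ) ∂μ) ^ (1/2:ℝ) ≤ M' ^ (1/2:ℝ) :=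
      Real.rpow_le_rpow (integral_nonneg fun ω => Real.rpow_nonneg (hA0 n ω) _)
        (hA2bound n) (by norm_num)
    have hCp : 0 ≤ C ^ p := Real.rpow_nonneg hC.le _
    have hJh : 0 ≤ J n ^ (1/2:ℝ) := Real.rpow_nonneg (hJ0 n) _
    calc (∫ ω, |(∫ l in (0:ℝ)..1, g (l * X n ω + (1 - l) * X₀ ω)) - g (X₀ ω)| ^ p ∂μ)
        ≤ C ^ p * ∫ ω, A n ω * B n ω ∂μ := by rw [← step2]; exact step1
      _ ≤ C ^ p * ((∫ ω, A n ω ^ (2:ℝ) ∂μ) ^ (1/2:ℝ) * J n ^ (1/2:ℝ)) := by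
          rw [← hBJ]
          exact mul_le_mul_of_nonneg_left step3 hCp
      _ ≤ (C ^ p * M' ^ (1/2:ℝ)) * J n ^ (1/2:ℝ) := by
          rw [mul_assoc]
          exact mul_le_mul_of_nonneg_left
            (mul_le_mul_of_nonneg_right step4 hJh) hCp
  have htend : Filter.Tendsto (fun n => (C ^ p * M' ^ (1/2:ℝ)) * J n ^ (1/2:ℝ))
      Filter.atTop (nhds 0) := by
    have hcont : ContinuousAt (fun j : ℝ => j ^ (1/2:ℝ)) 0 :=
      Real.continuousAt_rpow_const 0 (1/2) (Or.inr (by norm_num))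
    have h1 : Filter.Tendsto (fun n => J n ^ (1/2:ℝ)) Filter.atTop (nhds 0) := by
      have := hcont.tendsto.comp hconv
      rwa [Real.zero_rpow (by norm_num : (1/2:ℝ) ≠ 0)] at this
    have := h1.const_mul (C ^ p * M' ^ (1/2:ℝ))
    simpa using this
  exact squeeze_zero (fun n => integral_nonneg fun ω => Real.rpow_nonneg (abs_nonneg _) _)
    hIle htend
end
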